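/- Let $X$ be a Banach lattice and suppose there is a sequence $(\phi_n)_{n\in\mathbb{N}}$ of lattice homomorphisms $\phi_n: X\to\mathbb{R}$ which separates the points of $X$. Then $X$ satisfies the $\sigma$-bounded chain condition: there exist sets $\mathcal{F}_n\subseteq X_+\setminus\{0\}$ for $n\ge 2$ with $X_+\setminus\{0\}=\bigcup_{n\ge 2}\mathcal{F}_n$ such that for each $n\ge 2$, any subset $\mathcal{G}\subseteq\mathcal{F}_n$ of cardinality $n$ contains two distinct elements $x,y$ with $x\wedge y\ne 0$. -/

import Mathlib

private lemma disjoint_aux {X : Type*} [NormedAddCommGroup X] [Lattice X] [HasSolidNorm X] [IsOrderedAddMonoid X] [NormedSpace ℝ X]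
    (φ : ℕ → X →L[ℝ] ℝ)
    (hlat : ∀ n x y, φ n (x ⊔ y) = max (φ n x) (φ n y))
    (m : ℕ) {x y : X} (hx : 0 ≤ x) (hy : 0 ≤ y) (h : x ⊓ y = 0) :
    φ m x = 0 ∨ φ m y = 0 := by
  have hpos : ∀ z : X, 0 ≤ z → 0 ≤ φ m z := by
    intro z hz
    have h1 := hlat m z 0
    rw [sup_eq_left.mpr hz, map_zero] at h1
    have := le_max_right (φ m z) 0
    linarith [h1 ▸ this]
  have hsum : x ⊔ y = x + y := by
    have := inf_add_sup x y
    rw [h, zero_add] at this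
    exact this
  have h2 := hlat m x y
  rw [hsum, map_add] at h2
  have hx' := hpos x hx
  have hy' := hpos y hy
  rcases le_total (φ m x) (φ m y) with hle | hle
  · left; rw [max_eq_right hle] at h2; linarith
  · right; rw [max_eq_left hle] at h2; linarith

/-- If a Banach lattice `X` admits a sequence of real-valued lattice homomorphisms
separating its points, then `X` satisfies the σ-bounded chain condition. -/
theorem sigma_bounded_chain_condition_of_separating_homs
    {X : Type*} [NormedAddCommGroup X] [Lattice X] [HasSolidNorm X] [IsOrderedAddMonoid X] [NormedSpace ℝ X] [CompleteSpace X]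
    (φ : ℕ → X →L[ℝ] ℝ)
    (hlat : ∀ n x y, φ n (x ⊔ y) = max (φ n x) (φ n y))
    (hsep : ∀ x : X, x ≠ 0 → ∃ n, φ n x ≠ 0) :
    ∃ F : ℕ → Set X,
      (∀ n, F n ⊆ {x : X | 0 ≤ x ∧ x ≠ 0}) ∧
      ({x : X | 0 ≤ x ∧ x ≠ 0} = ⋃ n ∈ {n : ℕ | 2 ≤ n}, F n) ∧
      (∀ n, 2 ≤ n → ∀ G : Finset X, ↑G ⊆ F n → G.card = n →
        ∃ x ∈ G, ∃ y ∈ G, x ≠ y ∧ x ⊓ y ≠ 0) := by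
  refine ⟨fun n => {x : X | (0 ≤ x ∧ x ≠ 0) ∧ ∃ m < n - 1, φ m x ≠ 0}, ?_, ?_, ?_⟩
  · intro n x hx; exact hx.1
  · ext x
    simp only [Set.mem_setOf_eq, Set.mem_iUnion]
    constructor
    · rintro ⟨hx0, hxne⟩
      obtain ⟨m, hm⟩ := hsep x hxne
      exact ⟨m + 2, by omega, ⟨hx0, hxne⟩, m, by omega, hm⟩
    · rintro ⟨n, _, h, _⟩
      exact h
  · intro n hn G hG hcard
    classical
    set g : X → ℕ := fun x => if h : ∃ m < n - 1, φ m x ≠ 0 then h.choose else 0 with hg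
    have hmaps : ∀ x ∈ G, g x ∈ Finset.range (n - 1) := by
      intro x hx
      obtain ⟨_, hex⟩ := hG hx
      simp only [hg, dif_pos hex, Finset.mem_range]
      exact hex.choose_spec.1
    have hlt : (Finset.range (n - 1)).card < G.card := by
      rw [hcard, Finset.card_range]; omega
    obtain ⟨x, hx, y, hy, hxy, hgeq⟩ :=
      Finset.exists_ne_map_eq_of_card_lt_of_maps_to hlt hmaps
    refine ⟨x, hx, y, hy, hxy, ?_⟩
    intro hinf
    obtain ⟨hx1, hexx⟩ := hG hx
    obtain ⟨hy1, hexy⟩ := hG hy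
    have hxv : φ (g x) x ≠ 0 := by simp only [hg, dif_pos hexx]; exact hexx.choose_spec.2
    have hyv : φ (g y) y ≠ 0 := by simp only [hg, dif_pos hexy]; exact hexy.choose_spec.2
    rw [hgeq] at hxv
    rcases disjoint_aux φ hlat (g y) hx1.1 hy1.1 hinf with h | h
    · exact hxv h
    · exact hyv h
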